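/- Set z₀ = ε' + ε τ and suppose θ₃(z₀) ≠ 0. Then the function z ↦ Θ_{ε,ε'}(z) is complex-differentiable at 0 and its derivative satisfies Θ_{ε,ε'}'(0) = (2π i ε + θ₃'(z₀)/θ₃(z₀)) · Θ_{ε,ε'}(0), where θ₃' is the derivative of θ₃ in z. (Equivalently, the logarithmic derivative Θ'/Θ(0), which equals π r_χ for the Robin-type constant r_χ of the chiral Cauchy kernel on the torus, is 2π i ε + (θ₃'/θ₃)(ε' + ε τ).) -/

import Mathlib

open Filter Topology Complex Real

/-- Theta function with characteristics:
`Θ_{ε,ε'}(z) = Σ_{n∈ℤ} exp(2πi(½τ(n+ε)² + (n+ε)(z+ε')))`. -/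
noncomputable def Theta (τ : ℂ) (ε ε' : ℝ) (z : ℂ) : ℂ :=
  ∑' n : ℤ, Complex.exp (2 * (Real.pi : ℂ) * Complex.I *
    ((1 / 2) * τ * ((n : ℂ) + (ε : ℂ)) ^ 2 + ((n : ℂ) + (ε : ℂ)) * (z + (ε' : ℂ))))

lemma Theta_eq (τ : ℂ) (ε ε' : ℝ) (z : ℂ) :
    Theta τ ε ε' z = Complex.exp (2 * (Real.pi : ℂ) * Complex.I *
      ((1 / 2) * τ * (ε : ℂ) ^ 2 + (ε : ℂ) * (z + (ε' : ℂ)))) *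
      jacobiTheta₂ (z + ((ε' : ℂ) + (ε : ℂ) * τ)) τ := by
  rw [Theta, jacobiTheta₂, ← tsum_mul_left]
  congr 1
  funext n
  rw [jacobiTheta₂_term, ← Complex.exp_add]
  congr 1
  ring

/-- With `z₀ = ε' + ετ` and `θ₃(z₀) ≠ 0`, the function `z ↦ Θ_{ε,ε'}(z)` is
complex-differentiable at `0` with derivative
`Θ_{ε,ε'}'(0) = (2πiε + θ₃'(z₀)/θ₃(z₀))·Θ_{ε,ε'}(0)`. -/
theorem stmt6 (τ : ℂ) (hτ : 0 < τ.im) (ε ε' : ℝ)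
    (h : jacobiTheta₂ ((ε' : ℂ) + (ε : ℂ) * τ) τ ≠ 0) :
    HasDerivAt (Theta τ ε ε')
      ((2 * (Real.pi : ℂ) * Complex.I * (ε : ℂ) +
          deriv (fun z : ℂ => jacobiTheta₂ z τ) ((ε' : ℂ) + (ε : ℂ) * τ) /
            jacobiTheta₂ ((ε' : ℂ) + (ε : ℂ) * τ) τ) *
        Theta τ ε ε' 0) 0 := by
  set z₀ : ℂ := (ε' : ℂ) + (ε : ℂ) * τ with hz₀
  have hfun : Theta τ ε ε' = fun z => Complex.exp (2 * (Real.pi : ℂ) * Complex.I *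
      ((1 / 2) * τ * (ε : ℂ) ^ 2 + (ε : ℂ) * (z + (ε' : ℂ)))) *
      jacobiTheta₂ (z + z₀) τ := funext fun z => Theta_eq τ ε ε' z
  have h1 : HasDerivAt (fun z : ℂ => Complex.exp (2 * (Real.pi : ℂ) * Complex.I *
      ((1 / 2) * τ * (ε : ℂ) ^ 2 + (ε : ℂ) * (z + (ε' : ℂ)))))
      (2 * (Real.pi : ℂ) * Complex.I * (ε : ℂ) *
        Complex.exp (2 * (Real.pi : ℂ) * Complex.I *
          ((1 / 2) * τ * (ε : ℂ) ^ 2 + (ε : ℂ) * (0 + (ε' : ℂ))))) 0 := by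
    have hin : HasDerivAt (fun z : ℂ => 2 * (Real.pi : ℂ) * Complex.I *
        ((1 / 2) * τ * (ε : ℂ) ^ 2 + (ε : ℂ) * (z + (ε' : ℂ))))
        (2 * (Real.pi : ℂ) * Complex.I * (ε : ℂ)) 0 := by
      have : HasDerivAt (fun z : ℂ => z) 1 0 := hasDerivAt_id 0
      simpa using (((this.add_const (ε' : ℂ)).const_mul (ε : ℂ)).const_add
        ((1 / 2) * τ * (ε : ℂ) ^ 2)).const_mul (2 * (Real.pi : ℂ) * Complex.I)
    simpa [mul_comm] using hin.cexp
  have h2 : HasDerivAt (fun z : ℂ => jacobiTheta₂ (z + z₀) τ)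
      (deriv (fun z : ℂ => jacobiTheta₂ z τ) z₀) 0 := by
    have hd := hasDerivAt_jacobiTheta₂_fst z₀ hτ
    have hd' := hd.deriv
    rw [hd']
    have : HasDerivAt (fun z : ℂ => z + z₀) 1 0 := (hasDerivAt_id 0).add_const z₀
    have hc := ((show HasDerivAt (fun x => jacobiTheta₂ x τ) (jacobiTheta₂' z₀ τ) (0 + z₀) by rw [zero_add]; exact hd).comp 0 this)
    rw [mul_one] at hc
    exact hc
  have hmul := h1.mul h2
  rw [hfun]
  refine hmul.congr_deriv ?_
  simp only [zero_add]
  field_simp
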